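/- Fix a real R ≠ 0, let G x = 1 − (Σ_μ ε μ * (x μ)²)/(4R²) and g μ ν x := (G x)⁻² * η μ ν. For each n : Fin D define the vector field φ⁽ⁿ⁾ μ x := (1 + (Σ_ρ ε ρ * (x ρ)²)/(4R²)) * (if μ = n then 1 else 0) − (1/(2R²)) * (ε n * x n) * x μ. Then each φ⁽ⁿ⁾ is a Killing vector field of g: for every x with G x ≠ 0 and all μ, ν : Fin D, Σ_γ φ⁽ⁿ⁾ γ x * ∂_γ (fun y => g μ ν y) x + Σ_γ g γ ν x * ∂_μ (fun y => φ⁽ⁿ⁾ γ y) x + Σ_γ g γ μ x * ∂_ν (fun y => φ⁽ⁿ⁾ γ y) x = 0. -/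

import Mathlib

noncomputable section

/-- The flat `so(p,q)` metric sign factor. -/
def eps (p : ℕ) {D : ℕ} (m : Fin D) : ℝ := if (m : ℕ) < p then -1 else 1

/-- The flat `so(p,q)` metric. -/
def eta (p : ℕ) {D : ℕ} (m n : Fin D) : ℝ := if m = n then eps p m else 0

set_option maxHeartbeats 1000000 in
theorem stmt_12 (p q : ℕ) (R : ℝ) (hR : R ≠ 0) :
    let D := p + q
    let G : (Fin D → ℝ) → ℝ := fun x => 1 - (∑ μ : Fin D, eps p μ * (x μ) ^ 2) / (4 * R ^ 2)
    let pd : Fin D → ((Fin D → ℝ) → ℝ) → ((Fin D → ℝ) → ℝ) :=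
      fun n f x => fderiv ℝ f x (Pi.single n 1)
    let g : Fin D → Fin D → (Fin D → ℝ) → ℝ :=
      fun μ ν x => ((G x) ^ 2)⁻¹ * eta p μ ν
    let φ : Fin D → Fin D → (Fin D → ℝ) → ℝ :=
      fun n μ x => (1 + (∑ ρ : Fin D, eps p ρ * (x ρ) ^ 2) / (4 * R ^ 2)) *
          (if μ = n then (1 : ℝ) else 0) - (1 / (2 * R ^ 2)) * (eps p n * x n) * x μ
    ∀ (n : Fin D) (x : Fin D → ℝ), G x ≠ 0 → ∀ μ ν : Fin D,
      (∑ γ : Fin D, φ n γ x * pd γ (fun y => g μ ν y) x) +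
        (∑ γ : Fin D, g γ ν x * pd μ (fun y => φ n γ y) x) +
        (∑ γ : Fin D, g γ μ x * pd ν (fun y => φ n γ y) x) = 0 := by
  intro D G pd g φ n x hx μ ν
  have hR2 : R ^ 2 ≠ 0 := pow_ne_zero 2 hR
  have hx2 : (G x) ^ 2 ≠ 0 := pow_ne_zero 2 hx
  have hproj : ∀ ρ : Fin D, HasFDerivAt (fun y : Fin D → ℝ => y ρ)
      (ContinuousLinearMap.proj (R := ℝ) (φ := fun _ : Fin D => ℝ) ρ) x :=
    fun ρ => hasFDerivAt_apply (𝕜 := ℝ) ρ x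
  obtain ⟨LS, hS, hLS⟩ : ∃ L : (Fin D → ℝ) →L[ℝ] ℝ,
      HasFDerivAt (fun y : Fin D → ℝ => ∑ ρ : Fin D, eps p ρ * (y ρ) ^ 2) L x ∧
      ∀ γ : Fin D, L (Pi.single γ 1) = 2 * eps p γ * x γ := by
    refine ⟨_, HasFDerivAt.fun_sum (fun ρ _ =>
      by have h := ((hasDerivAt_pow 2 (x ρ)).comp_hasFDerivAt x (hproj ρ)).const_mul (eps p ρ); exact h), ?_⟩
    intro γ
    simp [ContinuousLinearMap.sum_apply, Pi.single_apply, mul_ite, Finset.sum_ite_eq']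
    ring
  obtain ⟨LG, hG, hLG⟩ : ∃ L : (Fin D → ℝ) →L[ℝ] ℝ,
      HasFDerivAt G L x ∧ ∀ γ : Fin D, L (Pi.single γ 1) = -(eps p γ * x γ) / (2 * R ^ 2) := by
    refine ⟨_, (hS.mul_const ((4 * R ^ 2)⁻¹)).const_sub 1, ?_⟩
    intro γ
    simp [hLS]
    field_simp
    ring
  obtain ⟨Lg, hg, hLg⟩ : ∃ L : (Fin D → ℝ) →L[ℝ] ℝ,
      HasFDerivAt (fun y => g μ ν y) L x ∧
      ∀ γ : Fin D, L (Pi.single γ 1) = eta p μ ν * (eps p γ * x γ) * ((G x) ^ 3)⁻¹ / R ^ 2 := by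
    refine ⟨_, HasFDerivAt.mul_const
      (((hasDerivAt_pow 2 (G x)).inv hx2).comp_hasFDerivAt x hG) (eta p μ ν), ?_⟩
    intro γ
    simp [hLG, smul_eq_mul]
    field_simp
  have hφ : ∀ γ : Fin D, ∃ L : (Fin D → ℝ) →L[ℝ] ℝ,
      HasFDerivAt (fun y => φ n γ y) L x ∧
      ∀ m : Fin D, L (Pi.single m 1) =
        (if γ = n then eps p m * x m / (2 * R ^ 2) else 0)
        - 1 / (2 * R ^ 2) * eps p n *
          ((if n = m then 1 else 0) * x γ + x n * (if γ = m then 1 else 0)) := by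
    intro γ
    refine ⟨_, HasFDerivAt.sub
      (((hS.mul_const ((4 * R ^ 2)⁻¹)).const_add 1).mul_const (if γ = n then (1 : ℝ) else 0))
      ((((hproj n).const_mul (eps p n)).const_mul (1 / (2 * R ^ 2))).mul (hproj γ)), ?_⟩
    intro m
    simp [hLS, Pi.single_apply, smul_eq_mul]
    rcases eq_or_ne γ n with h1 | h1 <;> rcases eq_or_ne n m with h2 | h2 <;>
        rcases eq_or_ne γ m with h3 | h3 <;> subst_vars <;>
      simp_all [hLS, Pi.single_apply, smul_eq_mul] <;> field_simp <;> ring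
  choose Lφ hφ1 hφ2 using hφ
  have e1 : ∀ γ : Fin D, pd γ (fun y => g μ ν y) x
      = eta p μ ν * (eps p γ * x γ) * ((G x) ^ 3)⁻¹ / R ^ 2 := by
    intro γ
    show fderiv ℝ (fun y => g μ ν y) x (Pi.single γ 1) = _
    rw [hg.fderiv]; exact hLg γ
  have e2 : ∀ γ m : Fin D, pd m (fun y => φ n γ y) x =
      (if γ = n then eps p m * x m / (2 * R ^ 2) else 0)
      - 1 / (2 * R ^ 2) * eps p n *
        ((if n = m then 1 else 0) * x γ + x n * (if γ = m then 1 else 0)) := by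
    intro γ m
    show fderiv ℝ (fun y => φ n γ y) x (Pi.single m 1) = _
    rw [(hφ1 γ).fderiv]; exact hφ2 γ m
  have hGx : G x = 1 - (∑ ρ : Fin D, eps p ρ * (x ρ) ^ 2) / (4 * R ^ 2) := rfl
  have sum1 : (∑ γ : Fin D, φ n γ x * (eta p μ ν * (eps p γ * x γ) * ((G x) ^ 3)⁻¹ / R ^ 2))
      = eta p μ ν * (eps p n * x n) * ((G x) ^ 2)⁻¹ / R ^ 2 := by
    have expand : ∀ γ : Fin D,
        φ n γ x * (eta p μ ν * (eps p γ * x γ) * ((G x) ^ 3)⁻¹ / R ^ 2) =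
        (if γ = n then (1 + (∑ ρ : Fin D, eps p ρ * (x ρ) ^ 2) / (4 * R ^ 2)) *
            (eta p μ ν * (eps p n * x n) * ((G x) ^ 3)⁻¹ / R ^ 2) else 0)
        - (eps p γ * (x γ) ^ 2) *
            (1 / (2 * R ^ 2) * (eps p n * x n) * (eta p μ ν * ((G x) ^ 3)⁻¹ / R ^ 2)) := by
      intro γ
      have hφx : φ n γ x = (1 + (∑ ρ : Fin D, eps p ρ * (x ρ) ^ 2) / (4 * R ^ 2)) *
          (if γ = n then (1 : ℝ) else 0) - 1 / (2 * R ^ 2) * (eps p n * x n) * x γ := rfl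
      rw [hφx]
      by_cases h : γ = n
      · rw [if_pos h, if_pos h, h]; ring
      · rw [if_neg h, if_neg h]; ring
    rw [Finset.sum_congr rfl (fun γ _ => expand γ), Finset.sum_sub_distrib,
      Finset.sum_ite_eq' Finset.univ n, ← Finset.sum_mul]
    simp only [Finset.mem_univ, if_true]
    have h32 : (G x ^ 3)⁻¹ = (G x ^ 2)⁻¹ * (G x)⁻¹ := by
      rw [← mul_inv, ← pow_succ]
    rw [h32]
    linear_combination (eta p μ ν * (eps p n * x n) / R ^ 2 * ((G x) ^ 2)⁻¹) * mul_inv_cancel₀ hx -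
      (eta p μ ν * (eps p n * x n) / R ^ 2 * ((G x) ^ 2)⁻¹ * (G x)⁻¹) * hGx
  have collapse : ∀ (m : Fin D) (F : Fin D → ℝ),
      (∑ γ : Fin D, g γ m x * F γ) = ((G x) ^ 2)⁻¹ * eps p m * F m := by
    intro m F
    rw [Finset.sum_eq_single m]
    · show (((G x) ^ 2)⁻¹ * eta p m m) * F m = _
      simp [eta, mul_assoc]
    · intro b _ hb
      show (((G x) ^ 2)⁻¹ * eta p b m) * F b = 0
      simp [eta, hb]
    · intro h; exact absurd (Finset.mem_univ m) h
  simp only [e1, e2]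
  rw [sum1, collapse ν, collapse μ]
  have hval : ∀ m : Fin D, eps p m = 1 ∨ eps p m = -1 := by
    intro m; by_cases h : (m : ℕ) < p <;> simp [eps, h]
  simp only [eta]
  by_cases h1 : μ = ν
  · subst h1
    by_cases h2 : μ = n
    · subst h2
      rcases hval μ with h | h <;>
        simp [h] <;> field_simp <;> ring
    · rcases hval μ with h | h <;> rcases hval n with h' | h' <;>
        simp [h2, Ne.symm h2, h, h'] <;> field_simp <;> ring
  · by_cases h2 : μ = n <;> by_cases h3 : ν = n
    · exact absurd (h2.trans h3.symm) h1
    · subst h2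
      rcases hval μ with h | h <;> rcases hval ν with h' | h' <;>
        simp [h1, Ne.symm h1, h3, Ne.symm h3, h, h'] <;> field_simp <;> ring
    · subst h3
      rcases hval μ with h | h <;> rcases hval ν with h' | h' <;>
        simp [h1, Ne.symm h1, h2, Ne.symm h2, h, h'] <;> field_simp <;> ring
    · rcases hval μ with h | h <;> rcases hval ν with h' | h' <;> rcases hval n with h'' | h'' <;>
        simp [h1, Ne.symm h1, h2, Ne.symm h2, h3, Ne.symm h3, h, h', h''] <;>
        field_simp <;> ring
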